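/- Let f₁, f₂ be real quadratic forms in n variables and α₁, α₂ ∈ ℝ. There exists x ∈ ℝⁿ with f₁(x) = α₁ and f₂(x) = α₂ if and only if there exists a symmetric positive semidefinite n×n matrix Q with tr(A₁Q) = α₁ and tr(A₂Q) = α₂, where A₁, A₂ are the symmetric matrices representing f₁, f₂. -/

import Mathlib

open Matrix

private lemma symm_dp' {n : ℕ} {A : Matrix (Fin n) (Fin n) ℝ} (hA : A.IsSymm) (u v : Fin n → ℝ) :
    v ⬝ᵥ (A *ᵥ u) = u ⬝ᵥ (A *ᵥ v) := by
  rw [dotProduct_mulVec, ← mulVec_transpose, hA.eq, dotProduct_comm]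

private lemma expand' {n : ℕ} {A : Matrix (Fin n) (Fin n) ℝ} (hA : A.IsSymm) (u v : Fin n → ℝ)
    (a b c d : ℝ) :
    (a • u + b • v) ⬝ᵥ (A *ᵥ (c • u + d • v)) =
      a*c*(u ⬝ᵥ (A *ᵥ u)) + (a*d + b*c)*(u ⬝ᵥ (A *ᵥ v)) + b*d*(v ⬝ᵥ (A *ᵥ v)) := by
  simp only [mulVec_add, mulVec_smul, dotProduct_add, add_dotProduct, dotProduct_smul,
    smul_dotProduct, smul_eq_mul]
  rw [symm_dp' hA u v]
  ring

private lemma trace_A_BtB' {n : ℕ} (A B : Matrix (Fin n) (Fin n) ℝ) :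
    (A * (Bᵀ * B)).trace = ∑ i, (B i) ⬝ᵥ (A *ᵥ (B i)) := by
  rw [← Matrix.mul_assoc, Matrix.trace_mul_cycle]
  simp only [Matrix.trace, Matrix.diag, Matrix.mul_apply, Matrix.transpose_apply,
    dotProduct, Matrix.mulVec, Finset.sum_mul, Finset.mul_sum]
  congr 1; ext i
  rw [Finset.sum_comm]
  congr 1; ext j
  congr 1; ext k
  ring

private lemma psd_vmv' {n : ℕ} (x : Fin n → ℝ) : (vecMulVec x x).PosSemidef := by
  refine PosSemidef.of_dotProduct_mulVec_nonneg ?_ ?_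
  · ext i j
    simp [vecMulVec, Matrix.conjTranspose_apply, mul_comm]
  · intro y
    have h : vecMulVec x x *ᵥ y = (x ⬝ᵥ y) • x := by
      ext i
      simp only [vecMulVec_apply, Matrix.mulVec, dotProduct, Pi.smul_apply, smul_eq_mul,
        Finset.sum_mul]
      exact Finset.sum_congr rfl (fun j _ => by ring)
    rw [h]
    simp only [star_trivial, dotProduct_smul, smul_eq_mul]
    rw [dotProduct_comm]
    exact mul_self_nonneg _

private lemma trace_A_vmv' {n : ℕ} (A : Matrix (Fin n) (Fin n) ℝ) (x : Fin n → ℝ) :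
    (A * vecMulVec x x).trace = x ⬝ᵥ (A *ᵥ x) := by
  simp only [Matrix.trace, Matrix.diag, Matrix.mul_apply, vecMulVec_apply, dotProduct,
    Matrix.mulVec, Finset.mul_sum]
  refine Finset.sum_congr rfl (fun i _ => Finset.sum_congr rfl (fun j _ => by ring))

private lemma key2a' (p q P R b : ℝ) (hp : p ≠ 0) (hpq : 0 ≤ p*(p+q)) :
    ∃ α β : ℝ, α^2*p + β^2*q = p+q ∧ α^2*P + β^2*R + 2*α*β*b = P+R := by
  set rad : ℝ → ℝ := fun β => (p+q-β^2*q)/p with hraddef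
  have hrad : ∀ β ∈ Set.Icc (-1:ℝ) 1, 0 ≤ rad β := by
    intro β hβ
    have h1 : 0 ≤ 1 - β^2 := by nlinarith [hβ.1, hβ.2]
    have key : 0 ≤ (p+q-β^2*q)*p := by nlinarith [mul_nonneg h1 hpq, sq_nonneg (β*p)]
    have heq : rad β = ((p+q-β^2*q)*p)/p^2 := by
      simp only [hraddef]
      field_simp
    rw [heq]; positivity
  set g : ℝ → ℝ := fun β => (rad β)*P + β^2*R + 2*(Real.sqrt (rad β))*β*b with hgdef
  have hgc : Continuous g := by
    apply Continuous.add
    apply Continuous.add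
    · exact ((continuous_const.sub ((continuous_pow 2).mul continuous_const)).div_const p).mul
        continuous_const
    · exact (continuous_pow 2).mul continuous_const
    · exact ((continuous_const.mul ((Real.continuous_sqrt.comp
        ((continuous_const.sub ((continuous_pow 2).mul continuous_const)).div_const p)))).mul
        continuous_id).mul continuous_const
  have hrad1 : rad 1 = 1 := by simp only [hraddef]; field_simp; ring
  have hradm1 : rad (-1) = 1 := by simp only [hraddef]; field_simp; ring
  have hg1 : g 1 = P + R + 2*b := by simp [hgdef, hrad1]; try ring
  have hgm1 : g (-1) = P + R - 2*b := by simp [hgdef, hradm1]; try ring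
  have hmem : (P+R) ∈ Set.uIcc (g (-1)) (g 1) := by
    rw [hg1, hgm1, Set.mem_uIcc]
    rcases le_total b 0 with h | h
    · right; constructor <;> linarith
    · left; constructor <;> linarith
  obtain ⟨β, hβmem, hβ⟩ := intermediate_value_uIcc hgc.continuousOn hmem
  rw [Set.uIcc_of_le (by norm_num : (-1:ℝ) ≤ 1)] at hβmem
  have hα2 : (Real.sqrt (rad β))^2 = rad β := Real.sq_sqrt (hrad β hβmem)
  refine ⟨Real.sqrt (rad β), β, ?_, ?_⟩
  · rw [hα2, hraddef]
    field_simp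
    ring
  · rw [hα2]
    calc (rad β)*P + β^2*R + 2*(Real.sqrt (rad β))*β*b = g β := by rw [hgdef]
    _ = P + R := hβ

private lemma quadsolve' (P b : ℝ) (hP : P ≠ 0) :
    ∃ α : ℝ, α^2*P + 2*α*b - P = 0 := by
  have hpos : (0:ℝ) ≤ b^2 + P^2 := by positivity
  set s := Real.sqrt (b^2+P^2) with hsdef
  have hs : s^2 = b^2+P^2 := Real.sq_sqrt hpos
  refine ⟨(s-b)/P, ?_⟩
  field_simp
  linear_combination hs

private lemma key2' (p q P R b : ℝ) :
    ∃ α β : ℝ, α^2*p + β^2*q = p+q ∧ α^2*P + β^2*R + 2*α*β*b = P+R := by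
  by_cases hp : p ≠ 0 ∧ 0 ≤ p*(p+q)
  · exact key2a' p q P R b hp.1 hp.2
  · by_cases hq : q ≠ 0
    · have hq2 : 0 ≤ q*(q+p) := by
        by_cases hp0 : p = 0
        · subst hp0; simpa using mul_self_nonneg q
        · push_neg at hp
          have := hp hp0
          nlinarith [sq_nonneg (p+q)]
      obtain ⟨α, β, e1, e2⟩ := key2a' q p R P b hq hq2
      exact ⟨β, α, by linear_combination e1, by linear_combination e2⟩
    · push_neg at hq
      subst hq
      have hp0 : p = 0 := by
        by_contra h
        exact hp ⟨h, by simpa using mul_self_nonneg p⟩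
      subst hp0
      by_cases hP : P ≠ 0
      · obtain ⟨α, hα⟩ := quadsolve' P b hP
        exact ⟨α, 1, by ring, by linear_combination hα⟩
      · by_cases hR : R ≠ 0
        · obtain ⟨β, hβ⟩ := quadsolve' R b hR
          exact ⟨1, β, by ring, by linear_combination hβ⟩
        · push_neg at hP hR
          subst hP; subst hR
          exact ⟨0, 0, by ring, by ring⟩

private lemma rotate' {n : ℕ} {A₁ A₂ : Matrix (Fin n) (Fin n) ℝ}
    (h₁ : A₁.IsSymm) (h₂ : A₂.IsSymm) (u v : Fin n → ℝ) :
    ∃ x y : Fin n → ℝ,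
      x ⬝ᵥ (A₁ *ᵥ y) = 0 ∧
      (x ⬝ᵥ (A₁ *ᵥ x)) + (y ⬝ᵥ (A₁ *ᵥ y)) = (u ⬝ᵥ (A₁ *ᵥ u)) + (v ⬝ᵥ (A₁ *ᵥ v)) ∧
      (x ⬝ᵥ (A₂ *ᵥ x)) + (y ⬝ᵥ (A₂ *ᵥ y)) = (u ⬝ᵥ (A₂ *ᵥ u)) + (v ⬝ᵥ (A₂ *ᵥ v)) := by
  set fu := u ⬝ᵥ (A₁ *ᵥ u) with hfu
  set fv := v ⬝ᵥ (A₁ *ᵥ v) with hfv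
  set B := u ⬝ᵥ (A₁ *ᵥ v) with hB
  set h : ℝ → ℝ := fun θ => Real.cos θ * Real.sin θ * (fv - fu) +
    (Real.cos θ^2 - Real.sin θ^2)*B with hhdef
  have hhc : Continuous h := by
    apply Continuous.add
    · exact (Real.continuous_cos.mul Real.continuous_sin).mul continuous_const
    · exact (((Real.continuous_cos.pow 2).sub (Real.continuous_sin.pow 2)).mul continuous_const)
  have hh0 : h 0 = B := by simp [hhdef]
  have hhpi : h (Real.pi/2) = -B := by simp [hhdef]
  have hmem : (0:ℝ) ∈ Set.uIcc (h 0) (h (Real.pi/2)) := by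
    rw [hh0, hhpi, Set.mem_uIcc]
    rcases le_total B 0 with hBs | hBs
    · left; constructor <;> linarith
    · right; constructor <;> linarith
  obtain ⟨θ, _, hθ⟩ := intermediate_value_uIcc hhc.continuousOn hmem
  set c := Real.cos θ
  set s := Real.sin θ
  have pyth : c^2 + s^2 = 1 := Real.cos_sq_add_sin_sq θ
  refine ⟨c • u + s • v, (-s) • u + c • v, ?_, ?_, ?_⟩
  · rw [expand' h₁]
    have : c * s * (fv - fu) + (c^2 - s^2)*B = 0 := hθ
    linear_combination this
  · rw [expand' h₁, expand' h₁]
    linear_combination (fu+fv)*pyth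
  · rw [expand' h₂, expand' h₂]
    linear_combination ((u ⬝ᵥ (A₂ *ᵥ u)) + (v ⬝ᵥ (A₂ *ᵥ v)))*pyth

private lemma addpoint' {n : ℕ} {A₁ A₂ : Matrix (Fin n) (Fin n) ℝ}
    (h₁ : A₁.IsSymm) (h₂ : A₂.IsSymm) (u v : Fin n → ℝ) :
    ∃ z : Fin n → ℝ,
      z ⬝ᵥ (A₁ *ᵥ z) = (u ⬝ᵥ (A₁ *ᵥ u)) + (v ⬝ᵥ (A₁ *ᵥ v)) ∧
      z ⬝ᵥ (A₂ *ᵥ z) = (u ⬝ᵥ (A₂ *ᵥ u)) + (v ⬝ᵥ (A₂ *ᵥ v)) := by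
  obtain ⟨x, y, hb, hs1, hs2⟩ := rotate' h₁ h₂ u v
  obtain ⟨α, β, e1, e2⟩ := key2' (x ⬝ᵥ (A₁ *ᵥ x)) (y ⬝ᵥ (A₁ *ᵥ y))
    (x ⬝ᵥ (A₂ *ᵥ x)) (y ⬝ᵥ (A₂ *ᵥ y)) (x ⬝ᵥ (A₂ *ᵥ y))
  refine ⟨α • x + β • y, ?_, ?_⟩
  · rw [expand' h₁]
    linear_combination e1 + hs1 + (α*β+β*α)*hb
  · rw [expand' h₂]
    linear_combination e2 + hs2

private lemma sumpoint' {n : ℕ} {A₁ A₂ : Matrix (Fin n) (Fin n) ℝ}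
    (h₁ : A₁.IsSymm) (h₂ : A₂.IsSymm) (w : Fin n → (Fin n → ℝ)) (t : Finset (Fin n)) :
    ∃ z : Fin n → ℝ,
      z ⬝ᵥ (A₁ *ᵥ z) = ∑ i ∈ t, (w i) ⬝ᵥ (A₁ *ᵥ (w i)) ∧
      z ⬝ᵥ (A₂ *ᵥ z) = ∑ i ∈ t, (w i) ⬝ᵥ (A₂ *ᵥ (w i)) := by
  classical
  induction t using Finset.induction_on with
  | empty => exact ⟨0, by simp, by simp⟩
  | @insert a t' hnotmem ih =>
    obtain ⟨z, hz1, hz2⟩ := ih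
    obtain ⟨z', hz'1, hz'2⟩ := addpoint' h₁ h₂ (w a) z
    refine ⟨z', ?_, ?_⟩
    · rw [Finset.sum_insert hnotmem, hz'1, hz1]
    · rw [Finset.sum_insert hnotmem, hz'2, hz2]

theorem stmt_4 (n : ℕ) (A₁ A₂ : Matrix (Fin n) (Fin n) ℝ)
    (h₁ : A₁.IsSymm) (h₂ : A₂.IsSymm) (α₁ α₂ : ℝ) :
    (∃ x : Fin n → ℝ, x ⬝ᵥ (A₁ *ᵥ x) = α₁ ∧ x ⬝ᵥ (A₂ *ᵥ x) = α₂) ↔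
      ∃ Q : Matrix (Fin n) (Fin n) ℝ, Q.PosSemidef ∧
        (A₁ * Q).trace = α₁ ∧ (A₂ * Q).trace = α₂ := by
  constructor
  · rintro ⟨x, hx1, hx2⟩
    exact ⟨vecMulVec x x, psd_vmv' x, by rw [trace_A_vmv', hx1], by rw [trace_A_vmv', hx2]⟩
  · rintro ⟨Q, hQ, hQ1, hQ2⟩
    obtain ⟨B, rfl⟩ : ∃ B : Matrix (Fin n) (Fin n) ℝ, Q = Bᴴ * B := by
      open scoped MatrixOrder in exact CStarAlgebra.nonneg_iff_eq_star_mul_self.mp hQ.nonneg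
    have hBt : Bᴴ = Bᵀ := by
      ext i j; simp [Matrix.conjTranspose_apply]
    rw [hBt] at hQ1 hQ2
    rw [trace_A_BtB'] at hQ1 hQ2
    obtain ⟨z, hz1, hz2⟩ := sumpoint' h₁ h₂ (fun i => B i) Finset.univ
    exact ⟨z, by rw [hz1]; exact hQ1, by rw [hz2]; exact hQ2⟩
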